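/- Let A, h : [0, ∞) → ℝ be differentiable functions such that A is positive and nonincreasing, h is nondecreasing with h(0) = 1, and suppose there is a constant c₁ > 0 such that -A'(t)·h(t) = c₁ for all t ≥ 0. Then for every t ≥ 0 one has c₁·t ≤ h(t)·(A(0) - A(t)) ≤ h(t)·A(0); in particular -A'(t) ≤ A(0)/t for all t > 0. -/

import Mathlib

open Set

/-- If `A` is positive and nonincreasing on `[0, ∞)`, `h` is nondecreasing
there with `h 0 = 1`, both differentiable, and `-A'(t) h(t) = c₁ > 0` for all `t ≥ 0`,
then `c₁ t ≤ h(t) (A(0) - A(t)) ≤ h(t) A(0)` for `t ≥ 0`, and `-A'(t) ≤ A(0) / t`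
for `t > 0`. -/
theorem stmt_4 (A h A' h' : ℝ → ℝ) (c₁ : ℝ) (hc₁ : 0 < c₁)
    (hAder : ∀ t ∈ Ici (0:ℝ), HasDerivWithinAt A (A' t) (Ici 0) t)
    (hhder : ∀ t ∈ Ici (0:ℝ), HasDerivWithinAt h (h' t) (Ici 0) t)
    (hApos : ∀ t ∈ Ici (0:ℝ), 0 < A t)
    (hAmono : AntitoneOn A (Ici 0))
    (hhmono : MonotoneOn h (Ici 0))
    (hh0 : h 0 = 1)
    (heq : ∀ t ∈ Ici (0:ℝ), -A' t * h t = c₁) :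
    (∀ t ∈ Ici (0:ℝ), c₁ * t ≤ h t * (A 0 - A t) ∧ h t * (A 0 - A t) ≤ h t * A 0) ∧
    (∀ t : ℝ, 0 < t → -A' t ≤ A 0 / t) := by
  have hhpos : ∀ t ∈ Ici (0:ℝ), 0 < h t := by
    intro t ht
    have : (1:ℝ) ≤ h t := hh0 ▸ hhmono (le_refl (0:ℝ)) ht ht
    linarith
  have hA'neg : ∀ t ∈ Ici (0:ℝ), A' t < 0 := by
    intro t ht
    by_contra hcon
    push_neg at hcon
    have := heq t ht
    nlinarith [hhpos t ht]
  -- Key inequality: c₁ * t ≤ h t * (A 0 - A t) for t ≥ 0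
  have key : ∀ t ∈ Ici (0:ℝ), c₁ * t ≤ h t * (A 0 - A t) := by
    intro t ht
    -- φ s = c₁ * s + h t * A s is antitone on Icc 0 t
    have hanti : AntitoneOn (fun s => c₁ * s + h t * A s) (Icc 0 t) := by
      apply antitoneOn_of_hasDerivWithinAt_nonpos (f' := fun s => c₁ + h t * A' s)
        (convex_Icc 0 t)
      · have hAcont : ContinuousOn A (Icc 0 t) := fun x hx =>
          ((hAder x hx.1).continuousWithinAt).mono (fun y hy => hy.1)
        exact (continuousOn_const.mul continuousOn_id).add (continuousOn_const.mul hAcont)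
      · intro s hs
        rw [interior_Icc] at hs ⊢
        have hs0 : s ∈ Ici (0:ℝ) := le_of_lt hs.1
        have : HasDerivWithinAt (fun s => c₁ * s + h t * A s) (c₁ + h t * A' s) (Ici 0) s := by
          simpa [Pi.add_def] using ((hasDerivWithinAt_id s (Ici 0)).const_mul c₁).add
            ((hAder s hs0).const_mul (h t))
        exact this.mono (fun x hx => le_of_lt hx.1)
      · intro s hs
        rw [interior_Icc] at hs
        have hs0 : s ∈ Ici (0:ℝ) := le_of_lt hs.1
        have h1 : c₁ = -A' s * h s := (heq s hs0).symm
        have h2 : h s ≤ h t := hhmono hs0 ht (le_of_lt hs.2)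
        have h3 : A' s < 0 := hA'neg s hs0
        nlinarith
    have h0m : (0:ℝ) ∈ Icc (0:ℝ) t := ⟨le_refl 0, ht⟩
    have htm : t ∈ Icc (0:ℝ) t := ⟨ht, le_refl t⟩
    have := hanti h0m htm ht
    simp only [mul_zero, zero_add] at this
    linarith
  refine ⟨fun t ht => ⟨key t ht, ?_⟩, fun t ht => ?_⟩
  · have := hApos t ht
    have := hhpos t ht
    nlinarith
  · have ht' : t ∈ Ici (0:ℝ) := le_of_lt ht
    have h1 := key t ht'
    have h2 : h t * (A 0 - A t) ≤ h t * A 0 := by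
      nlinarith [hApos t ht', hhpos t ht']
    have h3 : c₁ * t ≤ h t * A 0 := le_trans h1 h2
    have h4 : -A' t * h t = c₁ := heq t ht'
    have h5 : 0 < h t := hhpos t ht'
    rw [le_div_iff₀ ht]
    nlinarith
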